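/- In the MFL system, for every interval index k and every t with (k−1)τ < t ≤ kτ, the global MFL momentum and the centralized MGD momentum satisfy ‖d(t) − d_[k](t)‖ ≤ δ[ C(γA)^{t₀}/(γ(A−1)) + D(γB)^{t₀}/(γ(B−1)) − (γ^{t₀} − 1)/(γ − 1) ], where t₀ = t − (k−1)τ. -/

import Mathlib

lemma aux_grad_wsum {n N : ℕ} (ρw : Fin N → ℝ) (Floc : Fin N → EuclideanSpace ℝ (Fin n) → ℝ)
    (hdiff : ∀ i, Differentiable ℝ (Floc i)) (v : EuclideanSpace ℝ (Fin n)) :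
    gradient (fun z => ∑ i, ρw i * Floc i z) v = ∑ i, ρw i • gradient (Floc i) v := by
  have h : HasGradientAt (fun z => ∑ i, ρw i * Floc i z) (∑ i, ρw i • gradient (Floc i) v) v := by
    rw [hasGradientAt_iff_hasFDerivAt]
    have e : (InnerProductSpace.toDual ℝ (EuclideanSpace ℝ (Fin n)))
        (∑ i, ρw i • gradient (Floc i) v)
        = ∑ i, ρw i • (InnerProductSpace.toDual ℝ (EuclideanSpace ℝ (Fin n))
            (gradient (Floc i) v)) := by
      simp [map_sum, map_smul]
    rw [e]
    exact HasFDerivAt.fun_sum fun i _ =>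
      ((hdiff i v).hasGradientAt.hasFDerivAt).const_mul (ρw i)
  exact h.gradient

set_option maxHeartbeats 2000000 in
/-- In the MFL system, for every interval index `k` and every `t` with
`(k−1)τ < t ≤ kτ`, the global MFL momentum and the centralized MGD momentum satisfy
`‖d(t) − d_[k](t)‖ ≤ δ[C(γA)^{t₀}/(γ(A−1)) + D(γB)^{t₀}/(γ(B−1)) − (γ^{t₀}−1)/(γ−1)]`
with `t₀ = t − (k−1)τ`. -/
theorem mfl_momentum_gap_to_centralized_mgd
    (n N : ℕ) (ρw : Fin N → ℝ) (hρpos : ∀ i, 0 < ρw i) (hρsum : ∑ i, ρw i = 1)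
    (Floc : Fin N → EuclideanSpace ℝ (Fin n) → ℝ)
    (hdiff : ∀ i, Differentiable ℝ (Floc i))
    (η β γ : ℝ) (hη : 0 < η) (hβ : 0 < β) (hγ0 : 0 < γ) (hγ1 : γ < 1)
    (hsmooth : ∀ i w₁ w₂, ‖gradient (Floc i) w₁ - gradient (Floc i) w₂‖ ≤ β * ‖w₁ - w₂‖)
    (Fg : EuclideanSpace ℝ (Fin n) → ℝ)
    (hFg : ∀ v, Fg v = ∑ i, ρw i * Floc i v)
    (δi : Fin N → ℝ)
    (hδi : ∀ i v, ‖gradient Fg v - gradient (Floc i) v‖ ≤ δi i)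
    (δ : ℝ) (hδ : δ = ∑ i, ρw i * δi i)
    (τ : ℕ) (hτ : 1 ≤ τ)
    -- MFL local sequences and their weighted averages
    (wtil dtil : Fin N → ℕ → EuclideanSpace ℝ (Fin n))
    (w d : ℕ → EuclideanSpace ℝ (Fin n))
    (hwavg : ∀ t, w t = ∑ i, ρw i • wtil i t)
    (hdavg : ∀ t, d t = ∑ i, ρw i • dtil i t)
    (hinit : ∀ i, wtil i 0 = w 0 ∧ dtil i 0 = d 0)
    -- local update: nodes are reset to the averages whenever τ ∣ t
    (hup_d : ∀ i, ∀ t : ℕ, dtil i (t + 1) =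
      γ • (if τ ∣ t then d t else dtil i t) +
        gradient (Floc i) (if τ ∣ t then w t else wtil i t))
    (hup_w : ∀ i, ∀ t : ℕ, wtil i (t + 1) =
      (if τ ∣ t then w t else wtil i t) - η • dtil i (t + 1))
    -- per-interval centralized MGD sequences
    (wk dk : ℕ → ℕ → EuclideanSpace ℝ (Fin n))
    (hk_init : ∀ k : ℕ, 1 ≤ k →
      dk k ((k - 1) * τ) = d ((k - 1) * τ) ∧ wk k ((k - 1) * τ) = w ((k - 1) * τ))
    (hk_up : ∀ k : ℕ, 1 ≤ k → ∀ t : ℕ, (k - 1) * τ < t → t ≤ k * τ →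
      dk k t = γ • dk k (t - 1) + gradient Fg (wk k (t - 1)) ∧
      wk k t = wk k (t - 1) - η • dk k t)
    -- the roots A > B of γx² − (1+γ+ηβ)x + 1 = 0 and the constants C, D
    (A B C D : ℝ)
    (hA : γ * A ^ 2 - (1 + γ + η * β) * A + 1 = 0)
    (hB : γ * B ^ 2 - (1 + γ + η * β) * B + 1 = 0)
    (hBA : B < A)
    (hC : C = (A - 1) / (A - B))
    (hD : D = (1 - B) / (A - B)) :
    ∀ k : ℕ, 1 ≤ k → ∀ t : ℕ, (k - 1) * τ < t → t ≤ k * τ →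
      ‖d t - dk k t‖ ≤ δ *
        (C * (γ * A) ^ (t - (k - 1) * τ) / (γ * (A - 1)) +
         D * (γ * B) ^ (t - (k - 1) * τ) / (γ * (B - 1)) -
         (γ ^ (t - (k - 1) * τ) - 1) / (γ - 1)) := by
  intro k hk t ht1 ht2
  -- ### scalar algebra ###
  have hABne : A - B ≠ 0 := sub_ne_zero.mpr hBA.ne'
  have hγne : γ ≠ 0 := hγ0.ne'
  have hβne : β ≠ 0 := hβ.ne'
  have hγ1ne : γ - 1 ≠ 0 := (sub_neg.mpr hγ1).ne
  have hsumAB : γ * (A + B) = 1 + γ + η * β := by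
    have h0 : (A - B) * (γ * (A + B) - (1 + γ + η * β)) = 0 := by linear_combination hA - hB
    rcases mul_eq_zero.mp h0 with h | h
    · exact absurd h hABne
    · linarith
  have hprod : γ * (A * B) = 1 := by linear_combination A * hsumAB - hA
  have hfact : γ * (1 - A) * (1 - B) = -(η * β) := by linear_combination hprod - hsumAB
  have hA1 : 1 < A := by
    by_contra hcon; push_neg at hcon
    nlinarith [mul_pos hη hβ,
      mul_nonneg (mul_nonneg hγ0.le (by linarith : (0:ℝ) ≤ 1 - A)) (by linarith : (0:ℝ) ≤ 1 - B)]
  have hB1 : B < 1 := by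
    by_contra hcon; push_neg at hcon
    nlinarith [mul_pos hη hβ,
      mul_nonneg (mul_nonneg hγ0.le (by linarith : (0:ℝ) ≤ A - 1)) (by linarith : (0:ℝ) ≤ B - 1)]
  have hA1ne : A - 1 ≠ 0 := sub_ne_zero.mpr hA1.ne'
  have hB1ne : B - 1 ≠ 0 := (sub_neg.mpr hB1).ne
  set lx : ℕ → ℝ := fun s => ((γ*A)^s - (γ*B)^s)/(γ*(A-B)) with hlx
  set ly : ℕ → ℝ := fun s =>
    ((A-1)*(γ*A)^s + (1-B)*(γ*B)^s - (A-B))/(β*(A-B)) with hly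
  set lG : ℕ → ℝ := fun s => lx s - (γ^s - 1)/(γ-1) with hlG
  have hx1 : lx 1 = 1 := by simp only [hlx, pow_one]; field_simp
  have hy1 : ly 1 = η := by
    simp only [hly, pow_one]
    rw [div_eq_iff (mul_ne_zero hβne hABne)]
    linear_combination hA - hB
  have hG1 : lG 1 = 0 := by simp [hlG, hx1, div_self hγ1ne]
  have hE1 : ∀ s : ℕ, lx (s+1) = γ * lx s + β * ly s + 1 := by
    intro s; simp only [hlx, hly]; field_simp; ring
  have hdivlem : ∀ X Y Z : ℝ, γ*X = γ*Y + η*β*Z →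
      X/(β*(A-B)) = Y/(β*(A-B)) + η*(Z/(γ*(A-B))) := by
    intro X Y Z h
    field_simp
    first
    | linear_combination (A-B)*h
    | linear_combination -((A-B)*h)
    | linear_combination ((A-B)*(A-B))*h
    | linear_combination -(((A-B)*(A-B))*h)
    | linear_combination (β*(A-B))*h
    | linear_combination (γ*(A-B))*h
    | linear_combination (β*γ*(A-B))*h
    | linear_combination (β*(A-B)*(A-B))*h
    | linear_combination (γ*(A-B)*(A-B))*h
    | linear_combination (β*γ*(A-B)*(A-B))*h
    | linear_combination h
    | linear_combination -h
  have hE2 : ∀ s : ℕ, ly (s+1) = ly s + η * lx (s+1) := by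
    intro s; simp only [hlx, hly]
    exact hdivlem _ _ _ (by linear_combination (γ*(γ*A)^s)*hA - (γ*(γ*B)^s)*hB)
  have hE3 : ∀ s : ℕ, lG (s+1) = γ * lG s + β * ly s := by
    intro s; simp only [hlG]
    rw [hE1 s]; field_simp; ring
  have hGoal : ∀ s : ℕ,
      C * (γ * A) ^ s / (γ * (A - 1)) + D * (γ * B) ^ s / (γ * (B - 1)) -
        (γ ^ s - 1) / (γ - 1) = lG s := by
    intro s; simp only [hlG, hlx]; rw [hC, hD]; field_simp; ring
  -- ### setup for the interval ###
  set ts := (k - 1) * τ with hts_def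
  have hts_dvd : τ ∣ ts := hts_def ▸ dvd_mul_left τ (k-1)
  have hkτ : k * τ = ts + τ := by
    have hk' : k = k - 1 + 1 := (Nat.succ_pred_eq_of_pos hk).symm
    calc k * τ = (k - 1 + 1) * τ := by conv_lhs => rw [hk']
    _ = (k - 1) * τ + τ := Nat.succ_mul _ _
    _ = ts + τ := by rw [hts_def]
  have hdk0 : dk k ts = d ts := by rw [hts_def]; exact (hk_init k hk).1
  have hwk0 : wk k ts = w ts := by rw [hts_def]; exact (hk_init k hk).2
  have hFg' : Fg = fun z => ∑ i, ρw i * Floc i z := funext hFg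
  have hgradsum : ∀ v, gradient Fg v = ∑ i, ρw i • gradient (Floc i) v := by
    intro v; rw [hFg']; exact aux_grad_wsum ρw Floc hdiff v
  have hnorm_wsum : ∀ (z : Fin N → EuclideanSpace ℝ (Fin n)) (c : Fin N → ℝ),
      (∀ i, ‖z i‖ ≤ c i) → ‖∑ i, ρw i • z i‖ ≤ ∑ i, ρw i * c i := by
    intro z c hc
    refine le_trans (norm_sum_le _ _) (Finset.sum_le_sum fun i _ => ?_)
    rw [norm_smul, Real.norm_of_nonneg (hρpos i).le]
    exact mul_le_mul_of_nonneg_left (hc i) (hρpos i).le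
  -- ### main induction ###
  have key : ∀ s : ℕ, 1 ≤ s → s ≤ τ →
      (∀ i, ‖dtil i (ts + s) - dk k (ts + s)‖ ≤ δi i * lx s
          ∧ ‖wtil i (ts + s) - wk k (ts + s)‖ ≤ δi i * ly s)
      ∧ ‖d (ts + s) - dk k (ts + s)‖ ≤ δ * lG s := by
    intro s
    induction s with
    | zero => intro h; exact absurd h (by omega)
    | succ s ih =>
      intro _ hsτ
      have hdk_up : dk k (ts + s + 1) = γ • dk k (ts + s) + gradient Fg (wk k (ts + s)) ∧
          wk k (ts + s + 1) = wk k (ts + s) - η • dk k (ts + s + 1) := by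
        have h := hk_up k hk (ts + s + 1) (by rw [← hts_def]; omega) (by rw [hkτ]; omega)
        rw [hts_def] at h
        simpa [Nat.add_sub_cancel, ← hts_def] using h
      rcases Nat.eq_zero_or_pos s with rfl | hs1
      · -- base case s + 1 = 1
        simp only [Nat.zero_add, Nat.add_zero] at hdk_up ⊢
        have hd_up : ∀ i, dtil i (ts + 1) = γ • d ts + gradient (Floc i) (w ts) := by
          intro i; have h := hup_d i ts; rwa [if_pos hts_dvd, if_pos hts_dvd] at h
        have hw_up : ∀ i, wtil i (ts + 1) = w ts - η • dtil i (ts + 1) := by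
          intro i; have h := hup_w i ts; rwa [if_pos hts_dvd] at h
        have hdd : ∀ i, dtil i (ts + 1) - dk k (ts + 1) =
            gradient (Floc i) (w ts) - gradient Fg (w ts) := by
          intro i; rw [hd_up i, hdk_up.1, hdk0, hwk0]; abel
        have hdbnd : ∀ i, ‖dtil i (ts + 1) - dk k (ts + 1)‖ ≤ δi i * lx 1 := by
          intro i
          rw [hdd i, norm_sub_rev, hx1, mul_one]
          exact hδi i _
        refine ⟨fun i => ⟨hdbnd i, ?_⟩, ?_⟩
        · have hww : wtil i (ts + 1) - wk k (ts + 1) =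
              η • (dk k (ts + 1) - dtil i (ts + 1)) := by
            rw [hw_up i, hdk_up.2, hwk0, smul_sub]; abel
          rw [hww, norm_smul, Real.norm_of_nonneg hη.le, norm_sub_rev, hy1, mul_comm (δi i) η]
          exact mul_le_mul_of_nonneg_left (by have h := hdbnd i; rwa [hx1, mul_one] at h) hη.le
        · have hdeq : d (ts + 1) - dk k (ts + 1) = 0 := by
            rw [hdavg (ts + 1), hdk_up.1, hdk0, hwk0, hgradsum (w ts)]
            simp only [hd_up, smul_add, Finset.sum_add_distrib, ← Finset.sum_smul, hρsum,
              one_smul]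
            abel
          rw [hdeq, norm_zero, hG1, mul_zero]
      · -- inductive step, s ≥ 1
        obtain ⟨ihn, ihg⟩ := ih hs1 (by omega)
        have hndvd : ¬ τ ∣ (ts + s) := by
          intro hdvd
          have h2 : τ ∣ s := (Nat.dvd_add_right hts_dvd).mp hdvd
          have := Nat.le_of_dvd hs1 h2
          omega
        have hd_up : ∀ i, dtil i (ts + s + 1) =
            γ • dtil i (ts + s) + gradient (Floc i) (wtil i (ts + s)) := by
          intro i; have h := hup_d i (ts + s); rwa [if_neg hndvd, if_neg hndvd] at h
        have hw_up : ∀ i, wtil i (ts + s + 1) = wtil i (ts + s) - η • dtil i (ts + s + 1) := by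
          intro i; have h := hup_w i (ts + s); rwa [if_neg hndvd] at h
        have hdbnd : ∀ i, ‖dtil i (ts + s + 1) - dk k (ts + s + 1)‖ ≤ δi i * lx (s + 1) := by
          intro i
          have heq : dtil i (ts + s + 1) - dk k (ts + s + 1) =
              γ • (dtil i (ts + s) - dk k (ts + s)) +
                ((gradient (Floc i) (wtil i (ts + s)) - gradient (Floc i) (wk k (ts + s))) +
                 (gradient (Floc i) (wk k (ts + s)) - gradient Fg (wk k (ts + s)))) := by
            rw [hd_up i, hdk_up.1, smul_sub]; abel
          rw [heq]
          have e1 : ‖γ • (dtil i (ts + s) - dk k (ts + s))‖ ≤ γ * (δi i * lx s) := by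
            rw [norm_smul, Real.norm_of_nonneg hγ0.le]
            exact mul_le_mul_of_nonneg_left (ihn i).1 hγ0.le
          have e2 : ‖gradient (Floc i) (wtil i (ts + s)) - gradient (Floc i) (wk k (ts + s))‖
              ≤ β * (δi i * ly s) :=
            le_trans (hsmooth i _ _) (mul_le_mul_of_nonneg_left (ihn i).2 hβ.le)
          have e3 : ‖gradient (Floc i) (wk k (ts + s)) - gradient Fg (wk k (ts + s))‖ ≤ δi i := by
            rw [norm_sub_rev]; exact hδi i _
          refine le_trans (norm_add_le _ _) ?_
          refine le_trans (add_le_add e1 (le_trans (norm_add_le _ _) (add_le_add e2 e3)))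
            (le_of_eq ?_)
          rw [hE1 s]; ring
        refine ⟨fun i => ⟨hdbnd i, ?_⟩, ?_⟩
        · show ‖wtil i (ts + s + 1) - wk k (ts + s + 1)‖ ≤ δi i * ly (s + 1)
          have heq : wtil i (ts + s + 1) - wk k (ts + s + 1) =
              (wtil i (ts + s) - wk k (ts + s)) -
                η • (dtil i (ts + s + 1) - dk k (ts + s + 1)) := by
            rw [hw_up i, hdk_up.2, smul_sub]; abel
          rw [heq]
          refine le_trans (norm_sub_le _ _) ?_
          have e2 : ‖η • (dtil i (ts + s + 1) - dk k (ts + s + 1))‖ ≤ η * (δi i * lx (s + 1)) := by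
            rw [norm_smul, Real.norm_of_nonneg hη.le]
            exact mul_le_mul_of_nonneg_left (hdbnd i) hη.le
          refine le_trans (add_le_add (ihn i).2 e2) (le_of_eq ?_)
          rw [hE2 s]; ring
        · show ‖d (ts + s + 1) - dk k (ts + s + 1)‖ ≤ δ * lG (s + 1)
          have hgeq : d (ts + s + 1) - dk k (ts + s + 1) =
              γ • (d (ts + s) - dk k (ts + s)) +
                ∑ i, ρw i • (gradient (Floc i) (wtil i (ts + s)) -
                  gradient (Floc i) (wk k (ts + s))) := by
            rw [hdavg (ts + s + 1), hdavg (ts + s), hdk_up.1, hgradsum (wk k (ts + s))]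
            simp only [hd_up, smul_add, smul_sub, smul_smul, Finset.sum_add_distrib,
              Finset.sum_sub_distrib, Finset.smul_sum, mul_comm]
            abel
          rw [hgeq]
          refine le_trans (norm_add_le _ _) ?_
          have e1 : ‖γ • (d (ts + s) - dk k (ts + s))‖ ≤ γ * (δ * lG s) := by
            rw [norm_smul, Real.norm_of_nonneg hγ0.le]
            exact mul_le_mul_of_nonneg_left ihg hγ0.le
          have e2 : ‖∑ i, ρw i • (gradient (Floc i) (wtil i (ts + s)) -
                gradient (Floc i) (wk k (ts + s)))‖ ≤ ∑ i, ρw i * (β * (δi i * ly s)) :=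
            hnorm_wsum _ _ fun i =>
              le_trans (hsmooth i _ _) (mul_le_mul_of_nonneg_left (ihn i).2 hβ.le)
          have e3 : ∑ i, ρw i * (β * (δi i * ly s)) = β * ly s * δ := by
            rw [hδ, Finset.mul_sum]
            exact Finset.sum_congr rfl fun i _ => by ring
          refine le_trans (add_le_add e1 e2) (le_of_eq ?_)
          rw [e3, hE3 s]; ring
  -- ### conclusion ###
  obtain ⟨s, rfl⟩ : ∃ s, t = ts + s := ⟨t - ts, by omega⟩
  have hs1 : 1 ≤ s := by omega
  have hsτ : s ≤ τ := by rw [hkτ] at ht2; omega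
  have hsub : ts + s - ts = s := by omega
  rw [hsub, hGoal s]
  exact (key s hs1 hsτ).2
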